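/- (Realignment / computable cross norm criterion) If ρ is a separable state on H = H_A ⊗ H_B, i.e. ρ = Σ_i p_i ρ_i^A ⊗ ρ_i^B with p_i > 0, Σ_i p_i = 1, and ρ_i^A, ρ_i^B density operators on H_A, H_B, then ‖ρ‖_CCN = Σ_{a=1}^{d} μ_a ≤ 1, where {μ_a} are the operator Schmidt coefficients of ρ. -/

import Mathlib

open scoped Kronecker ComplexOrder
open Matrix Finset

/-- Hilbert-Schmidt inner product on matrices. -/
noncomputable def hsInner {n : Type*} [Fintype n] (A B : Matrix n n ℂ) : ℂ :=
  (Aᴴ * B).trace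

/-- Hilbert-Schmidt norm. -/
noncomputable def hsNorm {n : Type*} [Fintype n] (A : Matrix n n ℂ) : ℝ :=
  Real.sqrt (hsInner A A).re

/-- A density operator: positive semidefinite with unit trace. -/
def IsDensity {n : Type*} [Fintype n] (ρ : Matrix n n ℂ) : Prop :=
  ρ.PosSemidef ∧ ρ.trace = 1

/-- A separable bipartite state: a convex combination of product density operators. -/
def IsSeparableState {NA NB : ℕ} (ρ : Matrix (Fin NA × Fin NB) (Fin NA × Fin NB) ℂ) : Prop :=
  ∃ (m : ℕ) (p : Fin m → ℝ)
    (ρA : Fin m → Matrix (Fin NA) (Fin NA) ℂ) (ρB : Fin m → Matrix (Fin NB) (Fin NB) ℂ),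
    (∀ i, 0 < p i) ∧ (∑ i, p i = 1) ∧ (∀ i, IsDensity (ρA i)) ∧ (∀ i, IsDensity (ρB i)) ∧
    ρ = ∑ i, (p i : ℂ) • (ρA i ⊗ₖ ρB i)

section aux
variable {n m : Type*} [Fintype n] [Fintype m]

lemma hsInner_eq_sum (A B : Matrix n n ℂ) :
    hsInner A B = ∑ p : n × n, (starRingEnd ℂ) (A p.1 p.2) * B p.1 p.2 := by
  rw [Fintype.sum_prod_type]
  simp only [hsInner, Matrix.trace, Matrix.diag, Matrix.mul_apply, Matrix.conjTranspose_apply]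
  exact Finset.sum_comm

lemma conjTranspose_kron (A : Matrix n n ℂ) (B : Matrix m m ℂ) :
    (A ⊗ₖ B)ᴴ = Aᴴ ⊗ₖ Bᴴ := by
  ext ⟨i, k⟩ ⟨j, l⟩
  simp [Matrix.conjTranspose_apply, Matrix.kroneckerMap_apply]

lemma hsInner_kron (A C : Matrix n n ℂ) (B D : Matrix m m ℂ) :
    hsInner (A ⊗ₖ B) (C ⊗ₖ D) = hsInner A C * hsInner B D := by
  rw [hsInner, conjTranspose_kron, ← Matrix.mul_kronecker_mul, Matrix.trace_kronecker]
  rfl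

lemma hsInner_sum_right {ι : Type*} (s : Finset ι) (A : Matrix n n ℂ) (B : ι → Matrix n n ℂ) :
    hsInner A (∑ i ∈ s, B i) = ∑ i ∈ s, hsInner A (B i) := by
  simp [hsInner, Matrix.mul_sum]

lemma hsInner_smul_right (c : ℂ) (A B : Matrix n n ℂ) :
    hsInner A (c • B) = c * hsInner A B := by
  simp [hsInner, Matrix.mul_smul]

lemma hsInner_self_re_nonneg (A : Matrix n n ℂ) : 0 ≤ (hsInner A A).re := by
  rw [hsInner_eq_sum]
  rw [Complex.re_sum]
  apply Finset.sum_nonneg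
  intro p _
  rw [Complex.conj_mul']
  norm_cast
  positivity

lemma hsNorm_sq (A : Matrix n n ℂ) : hsNorm A ^ 2 = (hsInner A A).re :=
  Real.sq_sqrt (hsInner_self_re_nonneg A)

lemma hsNorm_nonneg (A : Matrix n n ℂ) : 0 ≤ hsNorm A := Real.sqrt_nonneg _

lemma hsNorm_real_smul (r : ℝ) (hr : 0 ≤ r) (A : Matrix n n ℂ) :
    hsNorm ((r : ℂ) • A) = r * hsNorm A := by
  have h1 : hsInner ((r : ℂ) • A) ((r : ℂ) • A) = ((r ^ 2 : ℝ) : ℂ) * hsInner A A := by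
    rw [hsInner, Matrix.conjTranspose_smul, Matrix.smul_mul, Matrix.mul_smul, smul_smul,
      Matrix.trace_smul, smul_eq_mul, Complex.star_def, Complex.conj_ofReal, hsInner]
    push_cast
    ring
  rw [hsNorm, h1, Complex.re_ofReal_mul, Real.sqrt_mul (by positivity), Real.sqrt_sq hr, hsNorm]

lemma hsNorm_eq_one {A : Matrix n n ℂ} (h : hsInner A A = 1) : hsNorm A = 1 := by
  rw [hsNorm, h]
  simp

/-- Bessel's inequality for a HS-orthonormal family of matrices. -/
lemma bessel_hs {d : ℕ} (E : Fin d → Matrix n n ℂ)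
    (hE : ∀ a b, hsInner (E a) (E b) = if a = b then 1 else 0) (X : Matrix n n ℂ) :
    ∑ a, ‖hsInner (E a) X‖ ^ 2 ≤ (hsInner X X).re := by
  classical
  let v : Matrix n n ℂ → EuclideanSpace ℂ (n × n) := fun M => WithLp.toLp 2 (fun p => M p.1 p.2)
  have hv : ∀ M N : Matrix n n ℂ, (inner ℂ (v M) (v N) : ℂ) = hsInner M N := by
    intro M N
    rw [hsInner_eq_sum]
    simp [v, PiLp.inner_apply, RCLike.inner_apply, mul_comm]
  have hon : Orthonormal ℂ (fun a => v (E a)) := by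
    rw [orthonormal_iff_ite]
    intro a b
    rw [hv]
    exact hE a b
  have := hon.sum_inner_products_le (v X) (s := Finset.univ)
  calc ∑ a, ‖hsInner (E a) X‖ ^ 2
      = ∑ a, ‖(inner ℂ (v (E a)) (v X) : ℂ)‖ ^ 2 := by
        apply Finset.sum_congr rfl; intro a _; rw [hv]
    _ ≤ ‖v X‖ ^ 2 := this
    _ = (hsInner X X).re := by
        rw [← hv X X]
        exact (@inner_self_eq_norm_sq ℂ _ _ _ _ (v X)).symm

lemma hsNorm_density_le_one {n : Type*} [Fintype n] [DecidableEq n] {ρ : Matrix n n ℂ}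
    (h : IsDensity ρ) : hsNorm ρ ≤ 1 := by
  have hH : ρ.IsHermitian := h.1.1
  set U : Matrix n n ℂ := (Matrix.IsHermitian.eigenvectorUnitary hH : Matrix n n ℂ) with hU
  set D : Matrix n n ℂ := Matrix.diagonal (RCLike.ofReal ∘ hH.eigenvalues) with hD
  have hUU : star U * U = 1 :=
    Matrix.mem_unitaryGroup_iff'.mp (Matrix.IsHermitian.eigenvectorUnitary hH).2
  have hspec : ρ = U * D * star U := hH.spectral_theorem
  have htrD : D.trace = 1 := by
    have : ρ.trace = D.trace := by
      rw [hspec, Matrix.trace_mul_cycle, hUU, one_mul]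
    rw [← this, h.2]
  have hsum1 : ∑ i, hH.eigenvalues i = 1 := by
    have : ((∑ i, hH.eigenvalues i : ℝ) : ℂ) = 1 := by
      rw [← htrD, hD, Matrix.trace_diagonal]
      push_cast
      rfl
    exact_mod_cast this
  have hinner : (hsInner ρ ρ).re = ∑ i, hH.eigenvalues i ^ 2 := by
    have h2 : hsInner ρ ρ = (D * D).trace := by
      rw [hsInner, hH.eq]
      conv_lhs => rw [hspec]
      rw [show U * D * star U * (U * D * star U) = U * (D * (star U * U) * D) * star U by
        noncomm_ring]
      rw [hUU, mul_one, Matrix.trace_mul_cycle, hUU, one_mul]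
    have h3 : (D * D).trace = ((∑ i, hH.eigenvalues i ^ 2 : ℝ) : ℂ) := by
      rw [hD, Matrix.diagonal_mul_diagonal, Matrix.trace_diagonal]
      push_cast
      simp [Function.comp_apply, pow_two]
    rw [h2, h3, Complex.ofReal_re]
  have hev : ∀ i, 0 ≤ hH.eigenvalues i := fun i => h.1.eigenvalues_nonneg i
  have hle : (hsInner ρ ρ).re ≤ 1 := by
    rw [hinner]
    calc ∑ i, hH.eigenvalues i ^ 2 ≤ (∑ i, hH.eigenvalues i) ^ 2 :=
          Finset.sum_sq_le_sq_sum_of_nonneg (fun i _ => hev i)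
      _ = 1 := by rw [hsum1]; norm_num
  calc hsNorm ρ ≤ Real.sqrt 1 := Real.sqrt_le_sqrt hle
    _ = 1 := Real.sqrt_one

/-- The key lower bound: any product decomposition dominates the Schmidt coefficient sum. -/
lemma schmidt_sum_le {NA NB d : ℕ}
    (μ : Fin d → ℝ) (E : Fin d → Matrix (Fin NA) (Fin NA) ℂ)
    (F : Fin d → Matrix (Fin NB) (Fin NB) ℂ)
    (hE : ∀ a b, hsInner (E a) (E b) = if a = b then 1 else 0)
    (hF : ∀ a b, hsInner (F a) (F b) = if a = b then 1 else 0)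
    {m : ℕ} (A : Fin m → Matrix (Fin NA) (Fin NA) ℂ) (B : Fin m → Matrix (Fin NB) (Fin NB) ℂ)
    (heq : ∑ a, (μ a : ℂ) • (E a ⊗ₖ F a) = ∑ k, A k ⊗ₖ B k) :
    ∑ a, μ a ≤ ∑ k, hsNorm (A k) * hsNorm (B k) := by
  set c : Fin d → Fin m → ℂ := fun a k => hsInner (E a) (A k) with hc
  set dd : Fin d → Fin m → ℂ := fun a k => hsInner (F a) (B k) with hdd
  have hμa : ∀ a, (μ a : ℂ) = ∑ k, c a k * dd a k := by
    intro a
    have h1 : hsInner (E a ⊗ₖ F a) (∑ b, (μ b : ℂ) • (E b ⊗ₖ F b)) = (μ a : ℂ) := by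
      rw [hsInner_sum_right]
      have : ∀ b, hsInner (E a ⊗ₖ F a) ((μ b : ℂ) • (E b ⊗ₖ F b))
          = (μ b : ℂ) * ((if a = b then 1 else 0) * (if a = b then 1 else 0)) := by
        intro b
        rw [hsInner_smul_right, hsInner_kron, hE, hF]
      simp only [this, mul_ite, mul_one, mul_zero, ite_mul, zero_mul]
      simp
    have h2 : hsInner (E a ⊗ₖ F a) (∑ k, A k ⊗ₖ B k) = ∑ k, c a k * dd a k := by
      rw [hsInner_sum_right]
      exact Finset.sum_congr rfl fun k _ => hsInner_kron _ _ _ _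
    rw [← h1, heq, h2]
  have hsum : ∑ a, μ a = ∑ k, (∑ a, c a k * dd a k).re := by
    have : ((∑ a, μ a : ℝ) : ℂ) = ∑ k, ∑ a, c a k * dd a k := by
      push_cast
      rw [show (∑ a, (μ a : ℂ)) = ∑ a, ∑ k, c a k * dd a k from
        Finset.sum_congr rfl fun a _ => hμa a]
      exact Finset.sum_comm
    calc ∑ a, μ a = ((∑ a, μ a : ℝ) : ℂ).re := by rw [Complex.ofReal_re]
      _ = (∑ k, ∑ a, c a k * dd a k).re := by rw [this]
      _ = ∑ k, (∑ a, c a k * dd a k).re := by rw [Complex.re_sum]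
  rw [hsum]
  apply Finset.sum_le_sum
  intro k _
  calc (∑ a, c a k * dd a k).re
      ≤ ‖∑ a, c a k * dd a k‖ := Complex.re_le_norm _
    _ ≤ ∑ a, ‖c a k * dd a k‖ := by
        simpa using norm_sum_le Finset.univ (fun a => c a k * dd a k)
    _ = ∑ a, ‖c a k‖ * ‖dd a k‖ := by
        simp [_root_.map_mul]
    _ ≤ Real.sqrt (∑ a, ‖c a k‖ ^ 2) * Real.sqrt (∑ a, ‖dd a k‖ ^ 2) :=
        Real.sum_mul_le_sqrt_mul_sqrt _ _ _
    _ ≤ hsNorm (A k) * hsNorm (B k) := by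
        apply mul_le_mul
        · rw [hsNorm]
          exact Real.sqrt_le_sqrt (bessel_hs E hE (A k))
        · rw [hsNorm]
          exact Real.sqrt_le_sqrt (bessel_hs F hF (B k))
        · positivity
        · exact hsNorm_nonneg _

end aux

/-- The computable cross norm (CCN) on bipartite operators. -/
noncomputable def ccn {NA NB : ℕ} (C : Matrix (Fin NA × Fin NB) (Fin NA × Fin NB) ℂ) : ℝ :=
  sInf { r : ℝ | ∃ (n : ℕ) (A : Fin n → Matrix (Fin NA) (Fin NA) ℂ)
    (B : Fin n → Matrix (Fin NB) (Fin NB) ℂ),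
    C = ∑ k, A k ⊗ₖ B k ∧ r = ∑ k, hsNorm (A k) * hsNorm (B k) }

/-- An operator Schmidt decomposition of a bipartite operator `C`:
`C = ∑ a, μ a • (E a ⊗ₖ F a)` with `μ a ≥ 0` and `E`, `F` orthonormal families
with respect to the Hilbert-Schmidt inner product. -/
def SchmidtDecomp {NA NB : ℕ} (C : Matrix (Fin NA × Fin NB) (Fin NA × Fin NB) ℂ)
    (μ : Fin (min (NA ^ 2) (NB ^ 2)) → ℝ)
    (E : Fin (min (NA ^ 2) (NB ^ 2)) → Matrix (Fin NA) (Fin NA) ℂ)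
    (F : Fin (min (NA ^ 2) (NB ^ 2)) → Matrix (Fin NB) (Fin NB) ℂ) : Prop :=
  (∀ a, 0 ≤ μ a) ∧
  (∀ a b, hsInner (E a) (E b) = if a = b then 1 else 0) ∧
  (∀ a b, hsInner (F a) (F b) = if a = b then 1 else 0) ∧
  C = ∑ a, (μ a : ℂ) • (E a ⊗ₖ F a)

/-- The realignment (computable cross norm) criterion: a separable state has
‖ρ‖_CCN = ∑ μₐ ≤ 1. -/
theorem stmt8_realignment_criterion {NA NB : ℕ} (hA : 2 ≤ NA) (hB : 2 ≤ NB)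
    (ρ : Matrix (Fin NA × Fin NB) (Fin NA × Fin NB) ℂ)
    (hsep : IsSeparableState ρ)
    (μ : Fin (min (NA ^ 2) (NB ^ 2)) → ℝ)
    (E : Fin (min (NA ^ 2) (NB ^ 2)) → Matrix (Fin NA) (Fin NA) ℂ)
    (F : Fin (min (NA ^ 2) (NB ^ 2)) → Matrix (Fin NB) (Fin NB) ℂ)
    (hS : SchmidtDecomp ρ μ E F) :
    ccn ρ = ∑ a, μ a ∧ ∑ a, μ a ≤ 1 := by
  obtain ⟨hμ, hE, hF, hρ⟩ := hS
  have hnormE : ∀ a, hsNorm (E a) = 1 := fun a =>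
    hsNorm_eq_one (by rw [hE a a]; simp)
  have hnormF : ∀ a, hsNorm (F a) = 1 := fun a =>
    hsNorm_eq_one (by rw [hF a a]; simp)
  have mem₁ : (∑ a, μ a) ∈ { r : ℝ | ∃ (n : ℕ) (A : Fin n → Matrix (Fin NA) (Fin NA) ℂ)
      (B : Fin n → Matrix (Fin NB) (Fin NB) ℂ),
      ρ = ∑ k, A k ⊗ₖ B k ∧ r = ∑ k, hsNorm (A k) * hsNorm (B k) } := by
    refine ⟨min (NA ^ 2) (NB ^ 2), fun a => (μ a : ℂ) • E a, F, ?_, ?_⟩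
    · rw [hρ]
      exact Finset.sum_congr rfl fun a _ => (Matrix.smul_kronecker _ _ _).symm
    · refine (Finset.sum_congr rfl fun a _ => ?_).symm
      rw [hsNorm_real_smul _ (hμ a), hnormE, hnormF]
      ring
  have lb : ∀ r ∈ { r : ℝ | ∃ (n : ℕ) (A : Fin n → Matrix (Fin NA) (Fin NA) ℂ)
      (B : Fin n → Matrix (Fin NB) (Fin NB) ℂ),
      ρ = ∑ k, A k ⊗ₖ B k ∧ r = ∑ k, hsNorm (A k) * hsNorm (B k) }, ∑ a, μ a ≤ r := by
    rintro r ⟨nn, A, B, hCB, rfl⟩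
    exact schmidt_sum_le μ E F hE hF A B (by rw [← hρ]; exact hCB)
  have hccn : ccn ρ = ∑ a, μ a :=
    le_antisymm (csInf_le ⟨∑ a, μ a, fun r hr => lb r hr⟩ mem₁) (le_csInf ⟨_, mem₁⟩ lb)
  refine ⟨hccn, ?_⟩
  obtain ⟨m, p, ρA, ρB, hp, hp1, hdA, hdB, hrho⟩ := hsep
  have heq : ∑ a, (μ a : ℂ) • (E a ⊗ₖ F a) = ∑ i, ((p i : ℂ) • ρA i) ⊗ₖ ρB i := by
    rw [← hρ, hrho]
    exact Finset.sum_congr rfl fun i _ => (Matrix.smul_kronecker _ _ _).symm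
  calc ∑ a, μ a ≤ ∑ i, hsNorm ((p i : ℂ) • ρA i) * hsNorm (ρB i) :=
        schmidt_sum_le μ E F hE hF _ _ heq
    _ ≤ ∑ i, p i := by
        apply Finset.sum_le_sum
        intro i _
        rw [hsNorm_real_smul _ (hp i).le]
        calc p i * hsNorm (ρA i) * hsNorm (ρB i)
            ≤ p i * 1 * 1 := by
              apply mul_le_mul
              · exact mul_le_mul_of_nonneg_left (hsNorm_density_le_one (hdA i)) (hp i).le
              · exact hsNorm_density_le_one (hdB i)
              · exact hsNorm_nonneg _
              · exact mul_nonneg (hp i).le zero_le_one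
          _ = p i := by ring
    _ = 1 := hp1
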